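/- If a constant cubic form A^{αβγ} on ℝ^4 satisfies the null condition A^{αβγ} ξ_α ξ_β ξ_γ = 0 for every Minkowski-null covector ξ (ξ_0² = Σ_a ξ_a²), with |A^{αβγ}| ≤ K, then on Λ' = {|x| ≤ t − 1} the one-frame component A̲^{000} := A^{αβγ} Ψ_α^0 Ψ_β^0 Ψ_γ^0 = A^{αβγ} with each index 0 replaced via Ψ^0_0 = 1, Ψ^0_a = −x^a/t, satisfies |A̲^{000}| ≤ C K (t² − |x|²)/t² for a universal constant C. -/

import Mathlib

/-- The one-frame covector `ψ`: `ψ_0 = 1`, `ψ_a = −x^a/t`. -/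
noncomputable def psiVec (t : ℝ) (x : Fin 3 → ℝ) : Fin 4 → ℝ :=
  fun γ => if h : γ = 0 then 1 else -(x (γ.pred h)) / t

lemma cubic_triple_abs {u1 u2 u3 v1 v2 v3 : ℝ}
    (hu2 : |u2| ≤ 1) (hu3 : |u3| ≤ 1)
    (hv1 : |v1| ≤ 1) (hv2 : |v2| ≤ 1) :
    |u1*u2*u3 - v1*v2*v3| ≤ |u1-v1| + |u2-v2| + |u3-v3| := by
  have h : u1*u2*u3 - v1*v2*v3 = (u1-v1)*u2*u3 + v1*(u2-v2)*u3 + v1*v2*(u3-v3) := by ring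
  rw [h]
  have b1 : |(u1-v1)*u2*u3| ≤ |u1-v1| := by
    rw [abs_mul, abs_mul]
    calc |u1-v1| * |u2| * |u3| ≤ |u1-v1| * |u2| :=
          mul_le_of_le_one_right (by positivity) hu3
      _ ≤ |u1-v1| := mul_le_of_le_one_right (abs_nonneg _) hu2
  have b2 : |v1*(u2-v2)*u3| ≤ |u2-v2| := by
    rw [abs_mul, abs_mul]
    calc |v1| * |u2-v2| * |u3| ≤ |v1| * |u2-v2| :=
          mul_le_of_le_one_right (by positivity) hu3
      _ ≤ 1 * |u2-v2| := mul_le_mul_of_nonneg_right hv1 (abs_nonneg _)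
      _ = |u2-v2| := one_mul _
  have b3 : |v1*v2*(u3-v3)| ≤ |u3-v3| := by
    rw [abs_mul, abs_mul]
    calc |v1| * |v2| * |u3-v3| ≤ 1 * |v2| * |u3-v3| := by
          apply mul_le_mul_of_nonneg_right _ (abs_nonneg _)
          exact mul_le_mul_of_nonneg_right hv1 (abs_nonneg _)
      _ = |v2| * |u3-v3| := by ring
      _ ≤ 1 * |u3-v3| := mul_le_mul_of_nonneg_right hv2 (abs_nonneg _)
      _ = |u3-v3| := one_mul _
  calc |(u1-v1)*u2*u3 + v1*(u2-v2)*u3 + v1*v2*(u3-v3)|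
      ≤ |(u1-v1)*u2*u3| + |v1*(u2-v2)*u3| + |v1*v2*(u3-v3)| := abs_add_three _ _ _
    _ ≤ |u1-v1| + |u2-v2| + |u3-v3| := by linarith

/-- A constant cubic form satisfying the Minkowski null condition, with entries
bounded by `K`, has one-frame `(0,0,0)`-component bounded by
`C K (t² − |x|²)/t²` on the cone `Λ' = {|x| ≤ t − 1}`. -/
theorem cubic_null_form_decay :
    ∃ C > (0 : ℝ), ∀ (A : Fin 4 → Fin 4 → Fin 4 → ℝ) (K : ℝ),
      (∀ ξ : Fin 4 → ℝ, (ξ 0) ^ 2 = ∑ a : Fin 3, (ξ a.succ) ^ 2 →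
        ∑ α : Fin 4, ∑ β : Fin 4, ∑ γ : Fin 4, A α β γ * ξ α * ξ β * ξ γ = 0) →
      (∀ α β γ, |A α β γ| ≤ K) →
      ∀ (t : ℝ) (x : Fin 3 → ℝ), Real.sqrt (∑ a : Fin 3, (x a) ^ 2) ≤ t - 1 →
        |∑ α : Fin 4, ∑ β : Fin 4, ∑ γ : Fin 4,
            A α β γ * psiVec t x α * psiVec t x β * psiVec t x γ|
          ≤ C * K * (t ^ 2 - ∑ a : Fin 3, (x a) ^ 2) / t ^ 2 := by
  refine ⟨192, by norm_num, ?_⟩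
  intro A K hnull hK t x hx
  set Q : ℝ := ∑ a : Fin 3, (x a) ^ 2 with hQ
  have hQ0 : 0 ≤ Q := Finset.sum_nonneg fun a _ => sq_nonneg _
  set r : ℝ := Real.sqrt Q with hr
  have hr0 : 0 ≤ r := Real.sqrt_nonneg _
  have hrsq : r ^ 2 = Q := Real.sq_sqrt hQ0
  have hrt : r ≤ t - 1 := hx
  have ht1 : 1 ≤ t := by linarith
  have ht0 : 0 < t := by linarith
  have hK0 : 0 ≤ K := le_trans (abs_nonneg _) (hK 0 0 0)
  have hxa : ∀ a : Fin 3, |x a| ≤ r := by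
    intro a
    have h1 : (x a) ^ 2 ≤ Q := by
      rw [hQ]
      exact Finset.single_le_sum (fun b _ => sq_nonneg (x b)) (Finset.mem_univ a)
    calc |x a| = Real.sqrt ((x a) ^ 2) := (Real.sqrt_sq_eq_abs _).symm
      _ ≤ r := Real.sqrt_le_sqrt h1
  have hpsi : ∀ γ : Fin 4, |psiVec t x γ| ≤ 1 := by
    intro γ
    by_cases h : γ = 0
    · simp [psiVec, h]
    · simp only [psiVec, dif_neg h]
      rw [abs_div, abs_neg, abs_of_pos ht0, div_le_one ht0]
      calc |x (γ.pred h)| ≤ r := hxa _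
        _ ≤ t := by linarith
  rcases eq_or_lt_of_le hr0 with hr0' | hrpos
  · -- r = 0, so x = 0
    have hQz : Q = 0 := by rw [← hrsq, ← hr0']; norm_num
    have hxz : ∀ a, x a = 0 := by
      intro a
      have h := hxa a
      rw [← hr0'] at h
      exact abs_eq_zero.mp (le_antisymm h (abs_nonneg _))
    have hpsi0 : ∀ γ : Fin 4, psiVec t x γ = if γ = 0 then 1 else 0 := by
      intro γ
      by_cases h : γ = 0 <;> simp [psiVec, h, hxz]
    have hsum : (∑ α : Fin 4, ∑ β : Fin 4, ∑ γ : Fin 4,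
        A α β γ * psiVec t x α * psiVec t x β * psiVec t x γ) = A 0 0 0 := by
      simp [Fin.sum_univ_four, hpsi0]
    rw [hsum, hQz, sub_zero, mul_div_assoc, div_self (by positivity : (t:ℝ) ^ 2 ≠ 0),
      mul_one]
    calc |A 0 0 0| ≤ K := hK 0 0 0
      _ ≤ 192 * K := by linarith
  · -- r > 0
    set ω : Fin 4 → ℝ := fun γ => if h : γ = 0 then 1 else -(x (γ.pred h)) / r with hω
    have homega_null : (ω 0) ^ 2 = ∑ a : Fin 3, (ω a.succ) ^ 2 := by
      have h0 : ω 0 = 1 := by simp [hω]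
      have ha : ∀ a : Fin 3, ω a.succ = -(x a) / r := by
        intro a
        simp [hω, Fin.succ_ne_zero, Fin.pred_succ]
      rw [h0]
      simp only [ha]
      have hs : ∑ a : Fin 3, (-(x a) / r) ^ 2 = (∑ a : Fin 3, (x a) ^ 2) / r ^ 2 := by
        rw [Finset.sum_div]
        refine Finset.sum_congr rfl fun a _ => ?_
        rw [div_pow]; ring_nf
      rw [hs, ← hQ, ← hrsq, div_self (by positivity)]
      norm_num
    have hωz := hnull ω homega_null
    have hωb : ∀ γ : Fin 4, |ω γ| ≤ 1 := by
      intro γ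
      by_cases h : γ = 0
      · simp [hω, h]
      · simp only [hω, dif_neg h]
        rw [abs_div, abs_neg, abs_of_pos hrpos, div_le_one hrpos]
        exact hxa _
    set δ : ℝ := (t - r) / t with hδ
    have hδ0 : 0 ≤ δ := div_nonneg (by linarith) (le_of_lt ht0)
    have hdiff : ∀ γ : Fin 4, |psiVec t x γ - ω γ| ≤ δ := by
      intro γ
      by_cases h : γ = 0
      · simp [psiVec, hω, h, hδ0]
      · simp only [psiVec, hω, dif_neg h]
        have hxr := hxa (γ.pred h)
        have heq : -(x (γ.pred h)) / t - -(x (γ.pred h)) / r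
            = x (γ.pred h) * ((t - r) / (r * t)) := by
          field_simp; ring
        rw [heq, abs_mul, abs_of_nonneg
          (div_nonneg (by linarith : (0:ℝ) ≤ t - r) (by positivity : (0:ℝ) ≤ r * t))]
        calc |x (γ.pred h)| * ((t - r) / (r * t)) ≤ r * ((t - r) / (r * t)) := by
              apply mul_le_mul_of_nonneg_right hxr
              exact div_nonneg (by linarith) (by positivity)
          _ = (t - r) / t := by field_simp
          _ = δ := hδ.symm
    -- main estimate
    have key : (∑ α : Fin 4, ∑ β : Fin 4, ∑ γ : Fin 4,
        A α β γ * psiVec t x α * psiVec t x β * psiVec t x γ)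
        = ∑ α : Fin 4, ∑ β : Fin 4, ∑ γ : Fin 4,
          (A α β γ * psiVec t x α * psiVec t x β * psiVec t x γ
            - A α β γ * ω α * ω β * ω γ) := by
      simp only [Finset.sum_sub_distrib]
      rw [hωz]; ring
    rw [key]
    have step1 : |∑ α : Fin 4, ∑ β : Fin 4, ∑ γ : Fin 4,
          (A α β γ * psiVec t x α * psiVec t x β * psiVec t x γ
            - A α β γ * ω α * ω β * ω γ)|
        ≤ ∑ α : Fin 4, ∑ β : Fin 4, ∑ γ : Fin 4,
          |A α β γ * psiVec t x α * psiVec t x β * psiVec t x γ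
            - A α β γ * ω α * ω β * ω γ| := by
      refine le_trans (Finset.abs_sum_le_sum_abs _ _) ?_
      refine Finset.sum_le_sum fun α _ => ?_
      refine le_trans (Finset.abs_sum_le_sum_abs _ _) ?_
      refine Finset.sum_le_sum fun β _ => ?_
      exact Finset.abs_sum_le_sum_abs _ _
    have step2 : ∀ α β γ : Fin 4,
        |A α β γ * psiVec t x α * psiVec t x β * psiVec t x γ
          - A α β γ * ω α * ω β * ω γ| ≤ K * (3 * δ) := by
      intro α β γ
      have heq : A α β γ * psiVec t x α * psiVec t x β * psiVec t x γ
          - A α β γ * ω α * ω β * ω γ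
          = A α β γ * (psiVec t x α * psiVec t x β * psiVec t x γ
            - ω α * ω β * ω γ) := by ring
      rw [heq, abs_mul]
      have h2 : |psiVec t x α * psiVec t x β * psiVec t x γ - ω α * ω β * ω γ|
          ≤ 3 * δ := by
        refine le_trans (cubic_triple_abs (hpsi β) (hpsi γ) (hωb α) (hωb β)) ?_
        have := hdiff α; have := hdiff β; have := hdiff γ; linarith
      exact mul_le_mul (hK α β γ) h2 (abs_nonneg _) hK0
    have step3 : (∑ α : Fin 4, ∑ β : Fin 4, ∑ γ : Fin 4,
          |A α β γ * psiVec t x α * psiVec t x β * psiVec t x γ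
            - A α β γ * ω α * ω β * ω γ|) ≤ 64 * (K * (3 * δ)) := by
      refine le_trans (Finset.sum_le_sum fun α _ => Finset.sum_le_sum fun β _ =>
        Finset.sum_le_sum fun γ _ => step2 α β γ) ?_
      simp only [Finset.sum_const, Finset.card_univ, Fintype.card_fin, nsmul_eq_mul]
      push_cast
      ring_nf
      rfl
    have final : 64 * (K * (3 * δ)) ≤ 192 * K * (t ^ 2 - Q) / t ^ 2 := by
      have htr : (0:ℝ) ≤ t - r := by linarith
      calc 64 * (K * (3 * δ)) = 192 * K * (t - r) / t := by rw [hδ]; ring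
        _ ≤ 192 * K * (t ^ 2 - r ^ 2) / t ^ 2 := by
            rw [div_le_div_iff₀ ht0 (by positivity)]
            nlinarith [mul_nonneg (mul_nonneg (mul_nonneg hK0 htr) hr0) ht0.le]
        _ = 192 * K * (t ^ 2 - Q) / t ^ 2 := by rw [hrsq]
    exact le_trans step1 (le_trans step3 final)
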